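/- Let α > 0, 1 ≤ K ≤ N, and let E = {x_1, …, x_N} be a sorted 2d Pareto front. The global minimum of Σ_{P ∈ π} f_α(P) over all partitions π of E into K nonempty subsets is attained by a partition into consecutive interval clusters: there exist indices 0 = j₀ < j₁ < ⋯ < j_K = N such that the partition {C_{j₀+1, j₁}, C_{j₁+1, j₂}, …, C_{j_{K−1}+1, j_K}} achieves this minimum. -/

import Mathlib

open scoped Classical

set_option maxHeartbeats 1000000

/-- Points of the plane with the Euclidean structure. -/
abbrev E2 := EuclideanSpace ℝ (Fin 2)

/-- The `α`-medoid cost `f_α(P) = min_{y ∈ P} Σ_{x ∈ P} ‖x − y‖^α` of a finite set `P`. -/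
noncomputable def fCost (α : ℝ) (P : Finset E2) : ℝ :=
  sInf ((fun y => ∑ z ∈ P, dist z y ^ α) '' ↑P)

/-- The interval cluster `C_{i,i'} = {x j : i ≤ j ≤ i'}`. -/
noncomputable def C (x : ℕ → E2) (i i' : ℕ) : Finset E2 := (Finset.Icc i i').image x

lemma dist_le_of_abs (u v w : E2)
    (h0 : |u 0 - v 0| ≤ |u 0 - w 0|) (h1 : |u 1 - v 1| ≤ |u 1 - w 1|) :
    dist u v ≤ dist u w := by
  rw [EuclideanSpace.dist_eq, EuclideanSpace.dist_eq]
  apply Real.sqrt_le_sqrt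
  rw [Fin.sum_univ_two, Fin.sum_univ_two]
  simp only [Real.dist_eq]
  exact add_le_add (pow_le_pow_left₀ (abs_nonneg _) h0 2) (pow_le_pow_left₀ (abs_nonneg _) h1 2)

lemma exists_medoid (α : ℝ) (P : Finset E2) (h : P.Nonempty) :
    ∃ y ∈ P, (∑ z ∈ P, dist z y ^ α) = fCost α P := by
  have hfin : ((fun y => ∑ z ∈ P, dist z y ^ α) '' ↑P).Finite := P.finite_toSet.image _
  have hne : ((fun y => ∑ z ∈ P, dist z y ^ α) '' ↑P).Nonempty := (h.to_set).image _
  obtain ⟨y, hy, hval⟩ := hne.csInf_mem hfin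
  exact ⟨y, hy, hval⟩

lemma fCost_le (α : ℝ) (P : Finset E2) {y : E2} (hy : y ∈ P) :
    fCost α P ≤ ∑ z ∈ P, dist z y ^ α := by
  have hfin : ((fun y => ∑ z ∈ P, dist z y ^ α) '' ↑P).Finite := P.finite_toSet.image _
  exact csInf_le hfin.bddBelow ⟨y, hy, rfl⟩

lemma sum_Ioc_partition (j : ℕ → ℕ) (hj : ∀ k, j k ≤ j (k + 1)) (F : ℕ → ℝ) (K : ℕ) :
    ∑ k ∈ Finset.range K, (∑ i ∈ Finset.Ioc (j k) (j (k + 1)), F i)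
      = ∑ i ∈ Finset.Ioc (j 0) (j K), F i := by
  induction K with
  | zero => simp
  | succ K ih =>
      rw [Finset.sum_range_succ, ih, Finset.sum_Ioc_consecutive]
      · exact monotone_nat_of_le_succ hj (Nat.zero_le K)
      · exact hj K

section
variable (N : ℕ) (x : ℕ → E2)
  (hsort : ∀ i j, 1 ≤ i → i < j → j ≤ N → x i 0 < x j 0 ∧ x j 1 < x i 1)

include hsort in
lemma coord_mono {i j : ℕ} (hi : 1 ≤ i) (hij : i ≤ j) (hj : j ≤ N) :
    x i 0 ≤ x j 0 ∧ x j 1 ≤ x i 1 := by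
  rcases eq_or_lt_of_le hij with rfl | h
  · exact ⟨le_refl _, le_refl _⟩
  · exact ⟨(hsort i j hi h hj).1.le, (hsort i j hi h hj).2.le⟩

include hsort in
lemma key_right {i a b : ℕ} (hi : 1 ≤ i) (hia : i ≤ a) (hab : a ≤ b) (hb : b ≤ N) :
    dist (x i) (x a) ≤ dist (x i) (x b) := by
  have h1 := coord_mono N x hsort hi hia (hab.trans hb)
  have h2 := coord_mono N x hsort hi (hia.trans hab) hb
  have h3 := coord_mono N x hsort (hi.trans hia) hab hb
  apply dist_le_of_abs
  · rw [abs_of_nonpos (by linarith [h1.1]), abs_of_nonpos (by linarith [h2.1])]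
    linarith [h3.1]
  · rw [abs_of_nonneg (by linarith [h1.2]), abs_of_nonneg (by linarith [h2.2])]
    linarith [h3.2]

include hsort in
lemma key_left {a b i : ℕ} (ha : 1 ≤ a) (hab : a ≤ b) (hbi : b ≤ i) (hi : i ≤ N) :
    dist (x i) (x b) ≤ dist (x i) (x a) := by
  have h1 := coord_mono N x hsort (ha.trans hab) hbi hi
  have h2 := coord_mono N x hsort ha (hab.trans hbi) hi
  have h3 := coord_mono N x hsort ha hab (hbi.trans hi)
  apply dist_le_of_abs
  · rw [abs_of_nonneg (by linarith [h1.1]), abs_of_nonneg (by linarith [h2.1])]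
    linarith [h3.1]
  · rw [abs_of_nonpos (by linarith [h1.2]), abs_of_nonpos (by linarith [h2.2])]
    linarith [h3.2]

include hsort in
lemma x_injOn : Set.InjOn x (Finset.Icc 1 N) := by
  intro i hi j hj hij
  simp only [Finset.coe_Icc, Set.mem_Icc] at hi hj
  by_contra hne
  rcases Nat.lt_or_ge i j with h | h
  · exact absurd (congrArg (· 0) hij) (ne_of_lt (hsort i j hi.1 h hj.2).1).elim
  · rcases Nat.lt_or_ge j i with h' | h'
    · exact absurd (congrArg (· 0) hij.symm) (ne_of_lt (hsort j i hj.1 h' hi.2).1).elim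
    · exact hne (le_antisymm h' h)

end

lemma exists_interval_le (α : ℝ) (hα : 0 < α) (K N : ℕ)
    (hK : 1 ≤ K) (hKN : K ≤ N) (x : ℕ → E2)
    (hsort : ∀ i j, 1 ≤ i → i < j → j ≤ N → x i 0 < x j 0 ∧ x j 1 < x i 1)
    (P : Fin K → Finset E2)
    (hne : ∀ k, (P k).Nonempty)
    (hdisj : ∀ k k', k ≠ k' → Disjoint (P k) (P k'))
    (hcover : Finset.univ.biUnion P = (Finset.Icc 1 N).image x) :
    ∃ j : ℕ → ℕ, j 0 = 0 ∧ j K = N ∧ (∀ k, k < K → j k < j (k + 1)) ∧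
      (∀ k, j k ≤ N) ∧
      ∑ k : Fin K, fCost α (C x (j k.val + 1) (j (k.val + 1))) ≤ ∑ k : Fin K, fCost α (P k) := by
  classical
  choose y hyP hyCost using fun k => exists_medoid α (P k) (hne k)
  have hyim : ∀ k, y k ∈ (Finset.Icc 1 N).image x := by
    intro k; rw [← hcover]; exact Finset.mem_biUnion.2 ⟨k, Finset.mem_univ _, hyP k⟩
  choose m hmIcc hxm using fun k => Finset.mem_image.1 (hyim k)
  have hminj : Function.Injective m := by
    intro a b hab
    by_contra hne'
    have hy' : y a = y b := by rw [← hxm a, ← hxm b, hab]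
    exact (Finset.disjoint_left.1 (hdisj a b hne')) (hyP a) (hy' ▸ hyP b)
  set σ := Tuple.sort m with hσdef
  have hMs : StrictMono (m ∘ σ) :=
    (Tuple.monotone_sort m).strictMono_of_injective (hminj.comp σ.injective)
  set Mn : ℕ → ℕ := fun n => if h : n < K then m (σ ⟨n, h⟩) else N + 1 with hMndef
  set Yn : ℕ → E2 := fun n => if h : n < K then y (σ ⟨n, h⟩) else 0 with hYndef
  have hMn1 : ∀ n, n < K → 1 ≤ Mn n := by
    intro n h; simp only [hMndef, dif_pos h]; exact (Finset.mem_Icc.1 (hmIcc _)).1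
  have hMnN : ∀ n, n < K → Mn n ≤ N := by
    intro n h; simp only [hMndef, dif_pos h]; exact (Finset.mem_Icc.1 (hmIcc _)).2
  have hMnmono : ∀ a b, a < b → b < K → Mn a < Mn b := by
    intro a b hab hb
    have ha : a < K := hab.trans hb
    simp only [hMndef, dif_pos ha, dif_pos hb]
    exact hMs (show (⟨a, ha⟩ : Fin K) < ⟨b, hb⟩ from hab)
  have hXY : ∀ n, n < K → x (Mn n) = Yn n := by
    intro n h; simp only [hMndef, hYndef, dif_pos h]; exact hxm _
  set Q : ℕ → ℕ → Prop :=
    fun k i => Mn (k - 1) ≤ i ∧ dist (x i) (Yn (k - 1)) ≤ dist (x i) (Yn k) with hQdef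
  set jP : ℕ → ℕ :=
    fun n => if n = 0 then 0 else if n < K then Nat.findGreatest (Q n) (Mn n - 1) else N
    with hjPdef
  -- basic facts about jP
  have hj0 : jP 0 = 0 := by simp [hjPdef]
  have hjK : jP K = N := by
    simp only [hjPdef, if_neg (by omega : ¬ K = 0), if_neg (lt_irrefl K)]
  have hQwit : ∀ n, 0 < n → n < K → Q n (Mn (n - 1)) := by
    intro n hn hnK
    refine ⟨le_refl _, ?_⟩
    rw [hXY _ (by omega)]
    simp [dist_nonneg]
  have hwitle : ∀ n, 0 < n → n < K → Mn (n - 1) ≤ Mn n - 1 := by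
    intro n hn hnK
    have := hMnmono (n - 1) n (by omega) hnK
    omega
  have hjlow : ∀ n, 0 < n → n < K → Mn (n - 1) ≤ jP n := by
    intro n hn hnK
    simp only [hjPdef, if_neg (by omega : ¬ n = 0), if_pos hnK]
    exact Nat.le_findGreatest (hwitle n hn hnK) (hQwit n hn hnK)
  have hjhigh : ∀ n, 0 < n → n < K → jP n ≤ Mn n - 1 := by
    intro n hn hnK
    simp only [hjPdef, if_neg (by omega : ¬ n = 0), if_pos hnK]
    exact Nat.findGreatest_le _
  have hQspec : ∀ n, 0 < n → n < K → Q n (jP n) := by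
    intro n hn hnK
    have := Nat.findGreatest_spec (hwitle n hn hnK) (hQwit n hn hnK)
    simpa only [hjPdef, if_neg (by omega : ¬ n = 0), if_pos hnK] using this
  have hjgreat : ∀ n, 0 < n → n < K → ∀ i, jP n < i → i ≤ Mn n - 1 → ¬ Q n i := by
    intro n hn hnK i h1 h2
    have : jP n = Nat.findGreatest (Q n) (Mn n - 1) := by
      simp only [hjPdef, if_neg (by omega : ¬ n = 0), if_pos hnK]
    exact Nat.findGreatest_is_greatest (this ▸ h1) h2
  have hjN : ∀ n, jP n ≤ N := by
    intro n
    rcases Nat.eq_zero_or_pos n with rfl | hn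
    · omega
    by_cases hnK : n < K
    · have := hjhigh n hn hnK; have := hMnN n hnK; omega
    · simp only [hjPdef, if_neg (by omega : ¬ n = 0), if_neg hnK]
      exact le_refl N
  have hjltM : ∀ k, k < K → jP k < Mn k := by
    intro k hkK
    rcases Nat.eq_zero_or_pos k with rfl | hk
    · rw [hj0]; exact hMn1 0 hkK
    · have := hjhigh k hk hkK; have := hMn1 k hkK; omega
  have hMlej : ∀ k, k < K → Mn k ≤ jP (k + 1) := by
    intro k hkK
    by_cases h : k + 1 < K
    · have := hjlow (k + 1) (by omega) h; simpa using this
    · have : jP (k + 1) = N := by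
        simp only [hjPdef, if_neg (by omega : ¬ k + 1 = 0), if_neg h]
      rw [this]; exact hMnN k hkK
  have hstep : ∀ k, k < K → jP k < jP (k + 1) :=
    fun k hk => lt_of_lt_of_le (hjltM k hk) (hMlej k hk)
  -- the main geometric claim
  have hclaim : ∀ k, k < K → ∀ i, jP k < i → i ≤ jP (k + 1) → ∀ g, g < K →
      dist (x i) (Yn k) ≤ dist (x i) (Yn g) := by
    intro k hkK i hi1 hi2 g hgK
    have hi1' : 1 ≤ i := by omega
    have hiN : i ≤ N := (hi2.trans (hjN _))
    -- neighbor right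
    have cNR : k + 1 < K → dist (x i) (Yn k) ≤ dist (x i) (Yn (k + 1)) := by
      intro hk1K
      have hspec := hQspec (k + 1) (by omega) hk1K
      simp only [hQdef, Nat.add_sub_cancel] at hspec
      have htM : jP (k + 1) ≤ Mn (k + 1) - 1 := hjhigh (k + 1) (by omega) hk1K
      have hM1 : 1 ≤ Mn (k + 1) := hMn1 _ hk1K
      rcases Nat.lt_or_ge i (Mn k) with hcase | hcase
      · rw [← hXY k hkK, ← hXY (k + 1) hk1K]
        exact key_right N x hsort hi1' (le_of_lt hcase)
          (le_of_lt (hMnmono k (k + 1) (by omega) hk1K)) (hMnN _ hk1K)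
      · -- Mn k ≤ i ≤ jP (k+1)
        have e1 : dist (x i) (Yn k) ≤ dist (x (jP (k + 1))) (Yn k) := by
          rw [← hXY k hkK, dist_comm, dist_comm (x (jP (k + 1)))]
          exact key_right N x hsort (hMn1 k hkK) hcase hi2 ((hjN _))
        have e3 : dist (x (jP (k + 1))) (Yn (k + 1)) ≤ dist (x i) (Yn (k + 1)) := by
          rw [← hXY (k + 1) hk1K, dist_comm, dist_comm (x i)]
          exact key_left N x hsort hi1' hi2 (by omega) (hMnN _ hk1K)
        exact e1.trans (hspec.2.trans e3)
    -- neighbor left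
    have cNL : 0 < k → dist (x i) (Yn k) ≤ dist (x i) (Yn (k - 1)) := by
      intro hk0
      rcases Nat.lt_or_ge i (Mn k) with hcase | hcase
      · -- jP k < i ≤ Mn k - 1 : use maximality
        have hnot := hjgreat k hk0 hkK i hi1 (by omega)
        simp only [hQdef] at hnot
        push_neg at hnot
        have hMk1i : Mn (k - 1) ≤ i := le_trans (hjlow k hk0 hkK) (le_of_lt hi1)
        exact le_of_lt (hnot hMk1i)
      · rw [← hXY k hkK, ← hXY (k - 1) (by omega)]
        exact key_left N x hsort (hMn1 _ (by omega))
          (le_of_lt (hMnmono (k - 1) k (by omega) hkK)) hcase hiN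
    rcases lt_trichotomy g k with hg | rfl | hg
    · -- g < k, so 0 < k
      have step1 : dist (x i) (Yn k) ≤ dist (x i) (Yn (k - 1)) := cNL (by omega)
      rcases Nat.eq_or_lt_of_le (Nat.le_sub_one_of_lt hg) with hg' | hg'
      · rw [← hg'] at step1; exact step1
      · refine step1.trans ?_
        rw [← hXY (k - 1) (by omega), ← hXY g (by omega)]
        have hMk1i : Mn (k - 1) ≤ i := le_trans (hjlow k (by omega) hkK) (le_of_lt hi1)
        exact key_left N x hsort (hMn1 g (by omega))
          (le_of_lt (hMnmono g (k - 1) hg' (by omega))) hMk1i hiN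
    · exact le_refl _
    · -- k < g, so k + 1 < K or g = k + 1
      have hk1K : k + 1 < K := by omega
      have step1 := cNR hk1K
      rcases Nat.eq_or_lt_of_le (Nat.succ_le_of_lt hg) with hg' | hg'
      · have hgg : k + 1 = g := hg'
        rw [← hgg]; exact step1
      · refine step1.trans ?_
        rw [← hXY (k + 1) hk1K, ← hXY g hgK]
        have hiM : i ≤ Mn (k + 1) := by
          have := hjhigh (k + 1) (by omega) hk1K
          omega
        exact key_right N x hsort hi1' hiM
          (le_of_lt (hMnmono (k + 1) g hg' hgK)) (hMnN g hgK)
  -- cluster assignment of points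
  have hcz : ∀ z ∈ (Finset.Icc 1 N).image x, ∃ g : Fin K, z ∈ P g := by
    intro z hz
    rw [← hcover] at hz
    obtain ⟨g, _, hg⟩ := Finset.mem_biUnion.1 hz
    exact ⟨g, hg⟩
  set cz : E2 → Fin K := fun z => if h : ∃ g : Fin K, z ∈ P g then h.choose else ⟨0, hK⟩
    with hczdef
  have hczP : ∀ z ∈ (Finset.Icc 1 N).image x, z ∈ P (cz z) := by
    intro z hz
    have h := hcz z hz
    simp only [hczdef, dif_pos h]
    exact h.choose_spec
  have hczEq : ∀ (g : Fin K), ∀ z ∈ P g, cz z = g := by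
    intro g z hzg
    by_contra hneq
    have hz : z ∈ (Finset.Icc 1 N).image x := by
      rw [← hcover]; exact Finset.mem_biUnion.2 ⟨g, Finset.mem_univ _, hzg⟩
    exact (Finset.disjoint_left.1 (hdisj _ _ hneq)) (hczP z hz) hzg
  have hYn_eq : ∀ g : Fin K, Yn ((σ.symm g).val) = y g := by
    intro g
    simp only [hYndef, dif_pos (σ.symm g).isLt]
    rw [Fin.eta, σ.apply_symm_apply]
  refine ⟨jP, hj0, hjK, hstep, hjN, ?_⟩
  have sub1 : ∀ k : Fin K, Finset.Icc (jP k.val + 1) (jP (k.val + 1)) ⊆ Finset.Icc 1 N := by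
    intro k
    exact Finset.Icc_subset_Icc (by omega) (hjN _)
  have hinj : ∀ (s : Finset ℕ), s ⊆ Finset.Icc 1 N →
      ∀ a ∈ s, ∀ b ∈ s, x a = x b → a = b := by
    intro s hs a ha b hb hab
    have ha' : a ∈ (↑(Finset.Icc 1 N) : Set ℕ) := Finset.mem_coe.2 (hs ha)
    have hb' : b ∈ (↑(Finset.Icc 1 N) : Set ℕ) := Finset.mem_coe.2 (hs hb)
    exact x_injOn N x hsort ha' hb' hab
  have step1 : ∀ k : Fin K,
      fCost α (C x (jP k.val + 1) (jP (k.val + 1)))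
        ≤ ∑ i ∈ Finset.Icc (jP k.val + 1) (jP (k.val + 1)), dist (x i) (Yn k.val) ^ α := by
    intro k
    have hMmem : Mn k.val ∈ Finset.Icc (jP k.val + 1) (jP (k.val + 1)) :=
      Finset.mem_Icc.2 ⟨by have := hjltM k.val k.isLt; omega, hMlej k.val k.isLt⟩
    have hYmem : Yn k.val ∈ C x (jP k.val + 1) (jP (k.val + 1)) := by
      rw [C, ← hXY k.val k.isLt]
      exact Finset.mem_image_of_mem x hMmem
    refine (fCost_le α _ hYmem).trans_eq ?_
    rw [C, Finset.sum_image (hinj _ (sub1 k))]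
  have step2 : ∀ k : Fin K, ∀ i ∈ Finset.Icc (jP k.val + 1) (jP (k.val + 1)),
      dist (x i) (Yn k.val) ^ α ≤ dist (x i) (y (cz (x i))) ^ α := by
    intro k i hi
    rw [Finset.mem_Icc] at hi
    have hcl := hclaim k.val k.isLt i (by omega) hi.2
      ((σ.symm (cz (x i))).val) (σ.symm (cz (x i))).isLt
    rw [hYn_eq (cz (x i))] at hcl
    exact Real.rpow_le_rpow dist_nonneg hcl hα.le
  have hmono : ∀ k, jP k ≤ jP (k + 1) := by
    intro k
    by_cases hkK : k < K
    · exact (hstep k hkK).le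
    · have h1 : jP k = N := by
        simp only [hjPdef, if_neg (by omega : ¬ k = 0), if_neg hkK]
      have h2 : jP (k + 1) = N := by
        simp only [hjPdef, if_neg (by omega : ¬ k + 1 = 0), if_neg (by omega : ¬ k + 1 < K)]
      rw [h1, h2]
  have hdisjPW : ((Finset.univ : Finset (Fin K)) : Set (Fin K)).PairwiseDisjoint P :=
    fun a _ b _ hab => hdisj a b hab
  calc ∑ k : Fin K, fCost α (C x (jP k.val + 1) (jP (k.val + 1)))
      ≤ ∑ k : Fin K, ∑ i ∈ Finset.Icc (jP k.val + 1) (jP (k.val + 1)),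
          dist (x i) (y (cz (x i))) ^ α := by
        exact Finset.sum_le_sum fun k _ => (step1 k).trans (Finset.sum_le_sum (step2 k))
    _ = ∑ i ∈ Finset.Icc 1 N, dist (x i) (y (cz (x i))) ^ α := by
        have hIoc : ∀ k : Fin K, Finset.Icc (jP k.val + 1) (jP (k.val + 1))
            = Finset.Ioc (jP k.val) (jP (k.val + 1)) := fun k => Finset.Icc_add_one_left_eq_Ioc _ _
        simp_rw [hIoc]
        rw [Fin.sum_univ_eq_sum_range (fun k => ∑ i ∈ Finset.Ioc (jP k) (jP (k + 1)),
          dist (x i) (y (cz (x i))) ^ α) K]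
        rw [sum_Ioc_partition jP hmono _ K, hj0, hjK, ← Finset.Icc_add_one_left_eq_Ioc, zero_add]
    _ = ∑ z ∈ (Finset.Icc 1 N).image x, dist z (y (cz z)) ^ α := by
        rw [Finset.sum_image (hinj _ (le_refl _))]
    _ = ∑ g : Fin K, ∑ z ∈ P g, dist z (y (cz z)) ^ α := by
        rw [← hcover, Finset.sum_biUnion hdisjPW]
    _ = ∑ g : Fin K, fCost α (P g) := by
        refine Finset.sum_congr rfl fun g _ => ?_
        rw [← hyCost g]
        exact Finset.sum_congr rfl fun z hz => by rw [hczEq g z hz]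

/-- On a sorted 2d Pareto front, the global minimum of `Σ_{P ∈ π} f_α(P)` over partitions
into `K` nonempty subsets is attained by a partition into consecutive interval clusters
`C_{j₀+1,j₁}, …, C_{j_{K−1}+1,j_K}` with `0 = j₀ < j₁ < ⋯ < j_K = N`. -/
theorem interval_partition_optimal (α : ℝ) (hα : 0 < α) (K N : ℕ)
    (hK : 1 ≤ K) (hKN : K ≤ N) (x : ℕ → E2)
    (hsort : ∀ i j, 1 ≤ i → i < j → j ≤ N → x i 0 < x j 0 ∧ x j 1 < x i 1) :
    ∃ j : ℕ → ℕ, j 0 = 0 ∧ j K = N ∧ (∀ k, k < K → j k < j (k + 1)) ∧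
      ∀ P : Fin K → Finset E2,
        (∀ k, (P k).Nonempty) →
        (∀ k k', k ≠ k' → Disjoint (P k) (P k')) →
        Finset.univ.biUnion P = (Finset.Icc 1 N).image x →
        ∑ k : Fin K, fCost α (C x (j k.val + 1) (j (k.val + 1))) ≤
          ∑ k : Fin K, fCost α (P k) := by
  classical
  set toJ : (Fin (K + 1) → Fin (N + 1)) → ℕ → ℕ :=
    fun f n => if h : n ≤ K then (f ⟨n, Nat.lt_succ_of_le h⟩).val else N with htoJ
  set Good : (Fin (K + 1) → Fin (N + 1)) → Prop :=
    fun f => toJ f 0 = 0 ∧ toJ f K = N ∧ ∀ k, k < K → toJ f k < toJ f (k + 1) with hGood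
  set cost : (Fin (K + 1) → Fin (N + 1)) → ℝ :=
    fun f => ∑ k : Fin K, fCost α (C x (toJ f k.val + 1) (toJ f (k.val + 1))) with hcost
  set S : Finset (Fin (K + 1) → Fin (N + 1)) := Finset.univ.filter Good with hS
  have hSne : S.Nonempty := by
    refine ⟨fun k => if h : k.val < K then ⟨k.val, by omega⟩ else ⟨N, by omega⟩, ?_⟩
    rw [hS, Finset.mem_filter]
    have hv : ∀ n, n ≤ K →
        toJ (fun k => if h : k.val < K then ⟨k.val, by omega⟩ else ⟨N, by omega⟩) n
          = if n < K then n else N := by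
      intro n h
      simp only [htoJ, dif_pos h]
      split_ifs <;> rfl
    refine ⟨Finset.mem_univ _, ?_, ?_, ?_⟩
    · rw [hv 0 (by omega), if_pos (by omega)]
    · rw [hv K le_rfl, if_neg (lt_irrefl K)]
    · intro k hk
      rw [hv k hk.le, hv (k + 1) hk]
      split_ifs <;> omega
  obtain ⟨f, hfS, hfmin⟩ := S.exists_min_image cost hSne
  have hfGood : Good f := (Finset.mem_filter.1 hfS).2
  refine ⟨toJ f, hfGood.1, hfGood.2.1, hfGood.2.2, ?_⟩
  intro P hne hdisj hcover
  obtain ⟨j, hj0, hjK, hjstep, hjN, hle⟩ :=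
    exists_interval_le α hα K N hK hKN x hsort P hne hdisj hcover
  set g : Fin (K + 1) → Fin (N + 1) :=
    fun k => ⟨j k.val, Nat.lt_succ_of_le (hjN k.val)⟩ with hg
  have hgtoJ : ∀ n, n ≤ K → toJ g n = j n := by
    intro n h
    simp only [htoJ, hg, dif_pos h]
  have hgS : g ∈ S := by
    rw [hS, Finset.mem_filter]
    refine ⟨Finset.mem_univ _, ?_, ?_, ?_⟩
    · rw [hgtoJ 0 (by omega), hj0]
    · rw [hgtoJ K le_rfl, hjK]
    · intro k hk
      rw [hgtoJ k hk.le, hgtoJ (k + 1) hk]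
      exact hjstep k hk
  have hcost_g : cost g = ∑ k : Fin K, fCost α (C x (j k.val + 1) (j (k.val + 1))) := by
    refine Finset.sum_congr rfl fun k _ => ?_
    rw [hgtoJ k.val k.isLt.le, hgtoJ (k.val + 1) k.isLt]
  calc ∑ k : Fin K, fCost α (C x (toJ f k.val + 1) (toJ f (k.val + 1)))
      = cost f := rfl
    _ ≤ cost g := hfmin g hgS
    _ = ∑ k : Fin K, fCost α (C x (j k.val + 1) (j (k.val + 1))) := hcost_g
    _ ≤ ∑ k : Fin K, fCost α (P k) := hle
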